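/- Let H be a complex Hilbert space and W a closed subspace of H ⊕ H. If W is maximally isotropic (W = W†, where W† = {(u₁,u₂) : ⟨u₂,v₁⟩ = ⟨u₁,v₂⟩ for all (v₁,v₂) ∈ W}), then there exists a unitary operator U on H such that W = {(u₁,u₂) ∈ H ⊕ H : i(I + U)u₁ = (I - U)u₂}. -/

import Mathlib

local notation "⟪" x ", " y "⟫" => @inner ℂ _ _ x y

namespace MaxIsoAux

variable {H : Type*} [NormedAddCommGroup H] [InnerProductSpace ℂ H]

/-- The map `(u₁,u₂) ↦ u₂ + c • u₁` restricted to `W`, as a continuous linear map. -/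
noncomputable def phi (W : Submodule ℂ (H × H)) (c : ℂ) : W →L[ℂ] H :=
  LinearMap.mkContinuous
    ((LinearMap.snd ℂ H H + c • LinearMap.fst ℂ H H).comp W.subtype)
    (1 + ‖c‖) (by
      intro p
      have h1 : ‖(p : H × H).1‖ ≤ ‖(p : H × H)‖ := norm_fst_le _
      have h2 : ‖(p : H × H).2‖ ≤ ‖(p : H × H)‖ := norm_snd_le _
      have : ‖(p : H × H).2 + c • (p : H × H).1‖ ≤ ‖(p : H × H).2‖ + ‖c‖ * ‖(p : H × H).1‖ := by
        simpa [norm_smul] using norm_add_le ((p : H × H).2) (c • (p : H × H).1)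
      have hc : (0:ℝ) ≤ ‖c‖ := norm_nonneg _
      have hnp : ‖(p : W)‖ = ‖(p : H × H)‖ := rfl
      simp only [LinearMap.comp_apply, LinearMap.add_apply, LinearMap.smul_apply,
        LinearMap.snd_apply, LinearMap.fst_apply, Submodule.coe_subtype]
      nlinarith)

@[simp] lemma phi_apply (W : Submodule ℂ (H × H)) (c : ℂ) (p : W) :
    phi W c p = (p : H × H).2 + c • (p : H × H).1 := rfl

lemma inner_self_phi {c : ℂ} (hc : (starRingEnd ℂ) c = -c) (hc2 : c * c = -1)
    {u₁ u₂ : H} (h : ⟪u₂, u₁⟫ = ⟪u₁, u₂⟫) :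
    (⟪u₂ + c • u₁, u₂ + c • u₁⟫ : ℂ) = ⟪u₁, u₁⟫ + ⟪u₂, u₂⟫ := by
  simp only [inner_add_left, inner_add_right, inner_smul_left, inner_smul_right, hc]
  linear_combination c * h - (⟪u₁, u₁⟫ : ℂ) * hc2

lemma norm_sq_phi {c : ℂ} (hc : (starRingEnd ℂ) c = -c) (hc2 : c * c = -1)
    {u₁ u₂ : H} (h : ⟪u₂, u₁⟫ = ⟪u₁, u₂⟫) :
    ‖u₂ + c • u₁‖ ^ 2 = ‖u₁‖ ^ 2 + ‖u₂‖ ^ 2 := by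
  have := inner_self_phi (H := H) hc hc2 h
  rw [inner_self_eq_norm_sq_to_K, inner_self_eq_norm_sq_to_K, inner_self_eq_norm_sq_to_K] at this
  exact_mod_cast this

variable [CompleteSpace H]

omit [CompleteSpace H] in
lemma phi_lower (W : Submodule ℂ (H × H))
    (hiso : ∀ p ∈ W, ∀ q ∈ W, ⟪Prod.snd p, Prod.fst q⟫ = ⟪Prod.fst p, Prod.snd q⟫)
    {c : ℂ} (hc : (starRingEnd ℂ) c = -c) (hc2 : c * c = -1) (p : W) :
    ‖(p : W)‖ ≤ ‖phi W c p‖ := by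
  have hreal : ⟪(p : H × H).2, (p : H × H).1⟫ = ⟪(p : H × H).1, (p : H × H).2⟫ :=
    hiso _ p.2 _ p.2
  have hns := norm_sq_phi (H := H) hc hc2 hreal
  have hphi : ‖phi W c p‖ = ‖(p : H × H).2 + c • (p : H × H).1‖ := rfl
  have h1 : ‖(p : H × H).1‖ ≤ ‖phi W c p‖ := by
    have := norm_nonneg (phi W c p); rw [hphi]; nlinarith [norm_nonneg (p : H × H).1,
      norm_nonneg (p : H × H).2, hns]
  have h2 : ‖(p : H × H).2‖ ≤ ‖phi W c p‖ := by
    have := norm_nonneg (phi W c p); rw [hphi]; nlinarith [norm_nonneg (p : H × H).1,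
      norm_nonneg (p : H × H).2, hns]
  have hnp : ‖(p : W)‖ = ‖(p : H × H)‖ := rfl
  rw [hnp, Prod.norm_def]
  exact max_le h1 h2

lemma phi_surjective (W : Submodule ℂ (H × H)) (hclosed : IsClosed (W : Set (H × H)))
    (hmax : (W : Set (H × H)) =
      {p : H × H | ∀ q ∈ W, ⟪p.2, (q : H × H).1⟫ = ⟪p.1, (q : H × H).2⟫})
    {c : ℂ} (hc : (starRingEnd ℂ) c = -c) (hc2 : c * c = -1) :
    Function.Surjective (phi W c) := by
  have hiso : ∀ p ∈ W, ∀ q ∈ W, ⟪Prod.snd p, Prod.fst q⟫ = ⟪Prod.fst p, Prod.snd q⟫ := by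
    intro p hp
    have : p ∈ (W : Set (H × H)) := hp
    rw [hmax] at this
    exact this
  haveI : CompleteSpace W := hclosed.completeSpace_coe
  have hanti : AntilipschitzWith 1 (phi W c) := by
    apply (phi W c).antilipschitz_of_bound
    intro x
    simpa using phi_lower W hiso hc hc2 x
  haveI : CompleteSpace (LinearMap.range (phi W c)) := by exact hanti.completeSpace_range_clm
  have hbot : (LinearMap.range (phi W c : W →ₗ[ℂ] H))ᗮ = ⊥ := by
    rw [Submodule.eq_bot_iff]
    intro w hw
    -- `(w, c • w)` belongs to `W†  = W`.
    have hmem : (w, c • w) ∈ W := by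
      have : (w, c • w) ∈ (W : Set (H × H)) := by
        rw [hmax]
        intro q hq
        have h0 : ⟪phi W c ⟨q, hq⟩, w⟫ = 0 :=
          (Submodule.mem_orthogonal _ _).1 hw _ (LinearMap.mem_range_self _ _)
        simp only [phi_apply] at h0
        rw [inner_add_left, inner_smul_left, hc] at h0
        -- h0 : ⟪q.2, w⟫ + (-c) * ⟪q.1, w⟫ = 0
        have h0' := congrArg (starRingEnd ℂ) h0
        simp only [map_add, map_mul, inner_conj_symm, map_neg, hc, map_zero] at h0'
        -- h0' : ⟪w, q.2⟫ + (- -c) * ... ; massage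
        simp only [inner_smul_left, hc]
        linear_combination -h0'
      exact this
    have h1 : ⟪phi W c ⟨(w, c • w), hmem⟩, w⟫ = 0 :=
      (Submodule.mem_orthogonal _ _).1 hw _ (LinearMap.mem_range_self _ _)
    simp only [phi_apply, inner_add_left, inner_smul_left, hc] at h1
    have h2 : (-(2:ℂ) * c) * ⟪w, w⟫ = 0 := by
      linear_combination h1
    have hcne : c ≠ 0 := by
      intro h; rw [h] at hc2; norm_num at hc2
    have : (⟪w, w⟫ : ℂ) = 0 := by
      rcases mul_eq_zero.1 h2 with h2 | h2
      · exfalso; apply hcne; have : (-(2:ℂ)) ≠ 0 := by norm_num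
        rcases mul_eq_zero.1 h2 with h | h
        · exact absurd h this
        · exact h
      · exact h2
    exact inner_self_eq_zero.1 this
  have htop : LinearMap.range (phi W c : W →ₗ[ℂ] H) = ⊤ := by
    rwa [Submodule.orthogonal_eq_bot_iff] at hbot
  exact LinearMap.range_eq_top.1 htop

end MaxIsoAux

open MaxIsoAux in
/-- Let `H` be a complex Hilbert space and `W` a closed subspace of
`H ⊕ H`.  If `W` is maximally isotropic, i.e. `W = W†` where
`W† = {(u₁,u₂) : ⟨u₂, v₁⟩ = ⟨u₁, v₂⟩ for all (v₁,v₂) ∈ W}`, then there is a unitary `U`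
on `H` with `W = {(u₁,u₂) : i (I + U) u₁ = (I - U) u₂}`. -/
theorem maximally_isotropic_is_cayley_graph
    {H : Type*} [NormedAddCommGroup H] [InnerProductSpace ℂ H] [CompleteSpace H]
    (W : Submodule ℂ (H × H)) (hclosed : IsClosed (W : Set (H × H)))
    (hmax : (W : Set (H × H)) =
      {p : H × H | ∀ q ∈ W, ⟪p.2, (q : H × H).1⟫ = ⟪p.1, (q : H × H).2⟫}) :
    ∃ U : H ≃ₗᵢ[ℂ] H,
      (W : Set (H × H)) = {p : H × H | Complex.I • (p.1 + U p.1) = p.2 - U p.2} := by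
  have hcI : (starRingEnd ℂ) Complex.I = -Complex.I := Complex.conj_I
  have hcI2 : Complex.I * Complex.I = -1 := Complex.I_mul_I
  have hcI' : (starRingEnd ℂ) (-Complex.I) = -(-Complex.I) := by simp [Complex.conj_I]
  have hcI2' : (-Complex.I) * (-Complex.I) = -1 := by simp [Complex.I_mul_I]
  have hiso : ∀ p ∈ W, ∀ q ∈ W, ⟪Prod.snd p, Prod.fst q⟫ = ⟪Prod.fst p, Prod.snd q⟫ := by
    intro p hp
    have : p ∈ (W : Set (H × H)) := hp
    rw [hmax] at this
    exact this
  have hsurjP : Function.Surjective (phi W Complex.I) := phi_surjective W hclosed hmax hcI hcI2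
  have hsurjM : Function.Surjective (phi W (-Complex.I)) := phi_surjective W hclosed hmax hcI' hcI2'
  have hinjP : Function.Injective (phi W Complex.I) := by
    intro p q hpq
    have h1 : ‖(↑(p - q) : W)‖ ≤ ‖phi W Complex.I (p - q)‖ := phi_lower W hiso hcI hcI2 (p - q)
    rw [map_sub, hpq, sub_self, norm_zero] at h1
    have : ‖p - q‖ = 0 := le_antisymm h1 (norm_nonneg _)
    rwa [norm_eq_zero, sub_eq_zero] at this
  -- the equivalence `W ≃ H` given by `phi W I`
  let e : W ≃ₗ[ℂ] H := LinearEquiv.ofBijective (phi W Complex.I) ⟨hinjP, hsurjP⟩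
  have he : ∀ p : W, e p = phi W Complex.I p := fun _ => rfl
  let Ulin : H →ₗ[ℂ] H := (phi W (-Complex.I)).toLinearMap.comp e.symm.toLinearMap
  have hUlin : ∀ x : H, Ulin x = phi W (-Complex.I) (e.symm x) := fun _ => rfl
  have hnormeq : ∀ p : W, ‖phi W (-Complex.I) p‖ = ‖phi W Complex.I p‖ := by
    intro p
    have hreal : ⟪(p : H × H).2, (p : H × H).1⟫ = ⟪(p : H × H).1, (p : H × H).2⟫ :=
      hiso _ p.2 _ p.2
    have h1 := norm_sq_phi (H := H) hcI hcI2 hreal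
    have h2 := norm_sq_phi (H := H) hcI' hcI2' hreal
    have : ‖phi W (-Complex.I) p‖ ^ 2 = ‖phi W Complex.I p‖ ^ 2 := by
      simp only [phi_apply]; rw [h1, h2]
    nlinarith [norm_nonneg (phi W (-Complex.I) p), norm_nonneg (phi W Complex.I p)]
  have hUnorm : ∀ x : H, ‖Ulin x‖ = ‖x‖ := by
    intro x
    rw [hUlin, hnormeq]
    conv_rhs => rw [← e.apply_symm_apply x]
    rw [he]
  have hUinj : Function.Injective Ulin := by
    intro x y hxy
    have : ‖x - y‖ = 0 := by rw [← hUnorm, map_sub, hxy, sub_self, norm_zero]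
    rwa [norm_eq_zero, sub_eq_zero] at this
  have hUsurj : Function.Surjective Ulin := by
    intro y
    obtain ⟨p, hp⟩ := hsurjM y
    exact ⟨e p, by rw [hUlin, LinearEquiv.symm_apply_apply, hp]⟩
  let U : H ≃ₗᵢ[ℂ] H :=
    { LinearEquiv.ofBijective Ulin ⟨hUinj, hUsurj⟩ with
      norm_map' := hUnorm }
  have hUapp : ∀ x : H, U x = Ulin x := fun _ => rfl
  refine ⟨U, ?_⟩
  ext p
  obtain ⟨u₁, u₂⟩ := p
  simp only [Set.mem_setOf_eq, SetLike.mem_coe]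
  constructor
  · intro hp
    have hq : Ulin (u₂ + Complex.I • u₁) = u₂ - Complex.I • u₁ := by
      have h1 : e ⟨(u₁, u₂), hp⟩ = u₂ + Complex.I • u₁ := by rw [he]; simp
      rw [hUlin, ← h1, LinearEquiv.symm_apply_apply]
      simp [neg_smul, sub_eq_add_neg]
    -- convert to statement form
    have hq' : Ulin u₂ + Complex.I • Ulin u₁ = u₂ - Complex.I • u₁ := by
      rw [← map_smul, ← map_add]; exact hq
    simp only [hUapp]
    linear_combination (norm := module) hq'
  · intro hp
    have hp' : Ulin u₂ + Complex.I • Ulin u₁ = u₂ - Complex.I • u₁ := by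
      simp only [hUapp] at hp
      linear_combination (norm := module) hp
    have hq : Ulin (u₂ + Complex.I • u₁) = u₂ - Complex.I • u₁ := by
      rw [map_add, map_smul]; exact hp'
    set q : W := e.symm (u₂ + Complex.I • u₁) with hqdef
    have heq1 : (q : H × H).2 + Complex.I • (q : H × H).1 = u₂ + Complex.I • u₁ := by
      have := e.apply_symm_apply (u₂ + Complex.I • u₁)
      rw [he] at this
      simpa only [phi_apply] using this
    have heq2 : (q : H × H).2 - Complex.I • (q : H × H).1 = u₂ - Complex.I • u₁ := by
      have := hq
      rw [hUlin] at this
      simp only [phi_apply] at this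
      rw [← hqdef] at this
      rw [← this]
      module
    have hq1 : (q : H × H).1 = u₁ := by
      have h3 : (2 * Complex.I) • (q : H × H).1 = (2 * Complex.I) • u₁ := by
        have e1 : (2 * Complex.I) • (q : H × H).1 =
            ((q : H × H).2 + Complex.I • (q : H × H).1) -
            ((q : H × H).2 - Complex.I • (q : H × H).1) := by module
        rw [e1, heq1, heq2]; module
      exact smul_right_injective H (by simp [Complex.I_ne_zero]) h3
    have hq2 : (q : H × H).2 = u₂ := by
      have h3 : (2 : ℂ) • (q : H × H).2 = (2 : ℂ) • u₂ := by
        have e1 : (2 : ℂ) • (q : H × H).2 =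
            ((q : H × H).2 + Complex.I • (q : H × H).1) +
            ((q : H × H).2 - Complex.I • (q : H × H).1) := by module
        rw [e1, heq1, heq2]; module
      exact smul_right_injective H (by norm_num) h3
    have : ((u₁, u₂) : H × H) = (q : H × H) := by rw [← hq1, ← hq2]
    rw [this]
    exact q.2
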